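/- Vanishing II for the Haghverdi–Scott trace: in a preadditive category with binary biproducts, let f : A ⊞ U ⊞ V ⟶ B ⊞ U ⊞ V with 3×3 matrix components f_ij (i,j ∈ {1,2,3}, indexing the summands A or B, U, V). Suppose 1_V − f₃₃ is an isomorphism, and let g := Tr_HS^V(f) : A ⊞ U ⟶ B ⊞ U, regarding f as a morphism (A⊞U) ⊞ V ⟶ (B⊞U) ⊞ V, so that in particular g₂₂ = f₂₂ + f₂₃∘(1_V − f₃₃)⁻¹∘f₃₂. Then 1_U − g₂₂ is an isomorphism if and only if 1_{U⊞V} minus the morphism U ⊞ V ⟶ U ⊞ V with components [[f₂₂, f₂₃],[f₃₂, f₃₃]] is an isomorphism, and in that case Tr_HS^U(g) = Tr_HS^{U⊞V}(f) (regarding f as a morphism A ⊞ (U⊞V) ⟶ B ⊞ (U⊞V)). -/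

import Mathlib

open CategoryTheory CategoryTheory.Limits

universe v u

variable {C : Type u} [Category.{v} C] [Preadditive C] [HasBinaryBiproducts C]

/-- The `(1,1)` matrix component of a morphism between binary biproducts. -/
noncomputable def c11 {X U Y V : C} (f : X ⊞ U ⟶ Y ⊞ V) : X ⟶ Y := biprod.inl ≫ f ≫ biprod.fst
/-- The `(1,2)` matrix component of a morphism between binary biproducts. -/
noncomputable def c12 {X U Y V : C} (f : X ⊞ U ⟶ Y ⊞ V) : U ⟶ Y := biprod.inr ≫ f ≫ biprod.fst
/-- The `(2,1)` matrix component of a morphism between binary biproducts. -/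
noncomputable def c21 {X U Y V : C} (f : X ⊞ U ⟶ Y ⊞ V) : X ⟶ V := biprod.inl ≫ f ≫ biprod.snd
/-- The `(2,2)` matrix component of a morphism between binary biproducts. -/
noncomputable def c22 {X U Y V : C} (f : X ⊞ U ⟶ Y ⊞ V) : U ⟶ V := biprod.inr ≫ f ≫ biprod.snd

/-- The Haghverdi–Scott trace of `f : X ⊞ W ⟶ Y ⊞ W`, defined when `1_W − f₂₂` is an
isomorphism. -/
noncomputable def trHS {X Y W : C} (f : X ⊞ W ⟶ Y ⊞ W) (h : IsIso (𝟙 W - c22 f)) :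
    X ⟶ Y :=
  c11 f + c21 f ≫ (letI := h; inv (𝟙 W - c22 f)) ≫ c12 f

/-- Vanishing II for the Haghverdi–Scott trace. For `f : (A ⊞ U) ⊞ V ⟶ (B ⊞ U) ⊞ V`
with `1_V − f₃₃` an isomorphism and `g := Tr_HS^V(f)`, one has
`g₂₂ = f₂₂ + f₂₃∘(1_V − f₃₃)⁻¹∘f₃₂`; moreover `1_U − g₂₂` is an isomorphism iff
`1_{U⊞V} − [[f₂₂,f₂₃],[f₃₂,f₃₃]]` is, and in that case
`Tr_HS^U(g) = Tr_HS^{U⊞V}(f)` (with `f` reassociated as a morphism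
`A ⊞ (U ⊞ V) ⟶ B ⊞ (U ⊞ V)`). -/
lemma schur_fact {U V : C} (E : U ⟶ U) (b : U ⟶ V) (a : V ⟶ U) (D : V ⟶ V) [IsIso D] :
    (biprod.desc (biprod.lift E b) (biprod.lift a D) : U ⊞ V ⟶ U ⊞ V) =
      (biprod.desc (biprod.lift (𝟙 U) (b ≫ inv D)) biprod.inr : U ⊞ V ⟶ U ⊞ V) ≫
        biprod.map (E - b ≫ inv D ≫ a) D ≫
        (biprod.desc biprod.inl (biprod.lift (inv D ≫ a) (𝟙 V)) : U ⊞ V ⟶ U ⊞ V) := by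
  ext <;>
  simp [biprod.lift_desc, biprod.map_eq, Preadditive.sub_comp, Preadditive.comp_sub,
    Preadditive.add_comp, Preadditive.comp_add]

lemma triU_isIso {U V : C} (t : U ⟶ V) :
    IsIso (biprod.desc (biprod.lift (𝟙 U) t) biprod.inr : U ⊞ V ⟶ U ⊞ V) := by
  refine ⟨biprod.desc (biprod.lift (𝟙 U) (-t)) biprod.inr, ?_, ?_⟩ <;>
    ext <;> simp [biprod.lift_desc, Preadditive.add_comp, Preadditive.comp_add]

lemma triL_isIso {U V : C} (s : V ⟶ U) :
    IsIso (biprod.desc biprod.inl (biprod.lift s (𝟙 V)) : U ⊞ V ⟶ U ⊞ V) := by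
  refine ⟨biprod.desc biprod.inl (biprod.lift (-s) (𝟙 V)), ?_, ?_⟩ <;>
    ext <;> simp [biprod.lift_desc, Preadditive.add_comp, Preadditive.comp_add]

lemma map_isIso_fst {U V U' V' : C} (S : U ⟶ U') (D : V ⟶ V')
    (h : IsIso (biprod.map S D)) : IsIso S := by
  refine ⟨biprod.inl ≫ inv (biprod.map S D) ≫ biprod.fst, ?_, ?_⟩
  · rw [← Category.assoc, ← biprod.inl_map S D, Category.assoc, IsIso.hom_inv_id_assoc,
      biprod.inl_fst]
  · rw [Category.assoc, Category.assoc, ← biprod.map_fst S D, ← Category.assoc (inv _),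
      IsIso.inv_hom_id, Category.id_comp, biprod.inl_fst]

lemma schur_iff {U V : C} (E : U ⟶ U) (b : U ⟶ V) (a : V ⟶ U) (D : V ⟶ V) [IsIso D] :
    IsIso (E - b ≫ inv D ≫ a) ↔
      IsIso (biprod.desc (biprod.lift E b) (biprod.lift a D) : U ⊞ V ⟶ U ⊞ V) := by
  haveI := triU_isIso (C := C) (b ≫ inv D)
  haveI := triL_isIso (C := C) (inv D ≫ a)
  constructor
  · intro hS
    haveI : IsIso (biprod.map (E - b ≫ inv D ≫ a) D) :=
      (biprod.mapIso (asIso (E - b ≫ inv D ≫ a)) (asIso D)).isIso_hom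
    rw [schur_fact]
    infer_instance
  · intro hN
    have key : biprod.map (E - b ≫ inv D ≫ a) D =
        inv (biprod.desc (biprod.lift (𝟙 U) (b ≫ inv D)) biprod.inr) ≫
          (biprod.desc (biprod.lift E b) (biprod.lift a D) : U ⊞ V ⟶ U ⊞ V) ≫
          inv (biprod.desc biprod.inl (biprod.lift (inv D ≫ a) (𝟙 V))) := by
      rw [schur_fact E b a D]
      simp
    have : IsIso (biprod.map (E - b ≫ inv D ≫ a) D) := by
      rw [key]; infer_instance
    exact map_isIso_fst _ D this

lemma schur_inv {U V : C} (E : U ⟶ U) (b : U ⟶ V) (a : V ⟶ U) (D : V ⟶ V) [IsIso D]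
    (hS : IsIso (E - b ≫ inv D ≫ a))
    (hN : IsIso (biprod.desc (biprod.lift E b) (biprod.lift a D) : U ⊞ V ⟶ U ⊞ V)) :
    inv (biprod.desc (biprod.lift E b) (biprod.lift a D) : U ⊞ V ⟶ U ⊞ V) =
      biprod.desc biprod.inl (biprod.lift (-(inv D ≫ a)) (𝟙 V)) ≫
        biprod.map (inv (E - b ≫ inv D ≫ a)) (inv D) ≫
        biprod.desc (biprod.lift (𝟙 U) (-(b ≫ inv D))) biprod.inr := by
  apply IsIso.inv_eq_of_hom_inv_id
  rw [schur_fact E b a D]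
  have h2 : (biprod.desc biprod.inl (biprod.lift (inv D ≫ a) (𝟙 V)) : U ⊞ V ⟶ U ⊞ V) ≫
      biprod.desc biprod.inl (biprod.lift (-(inv D ≫ a)) (𝟙 V)) = 𝟙 _ := by
    ext <;> simp [biprod.lift_desc, Preadditive.add_comp, Preadditive.comp_add]
  have h3 : biprod.map (E - b ≫ inv D ≫ a) D ≫
      biprod.map (inv (E - b ≫ inv D ≫ a)) (inv D) = 𝟙 _ := by
    ext <;> simp
  have h1 : (biprod.desc (biprod.lift (𝟙 U) (b ≫ inv D)) biprod.inr : U ⊞ V ⟶ U ⊞ V) ≫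
      biprod.desc (biprod.lift (𝟙 U) (-(b ≫ inv D))) biprod.inr = 𝟙 _ := by
    ext <;> simp [biprod.lift_desc, Preadditive.add_comp, Preadditive.comp_add]
  slice_lhs 3 4 => rw [h2]
  rw [Category.id_comp, ← Category.assoc (biprod.map _ _), h3, Category.id_comp, h1]

set_option maxHeartbeats 2000000 in
theorem trHS_vanishing_two {A B U V : C} (f : (A ⊞ U) ⊞ V ⟶ (B ⊞ U) ⊞ V)
    (hV : IsIso (𝟙 V - c22 f)) :
    -- 3×3 components of f
    (let f22 : U ⟶ U := (biprod.inr ≫ biprod.inl) ≫ f ≫ (biprod.fst ≫ biprod.snd)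
     let f23 : V ⟶ U := biprod.inr ≫ f ≫ (biprod.fst ≫ biprod.snd)
     let f32 : U ⟶ V := (biprod.inr ≫ biprod.inl) ≫ f ≫ biprod.snd
     let f33 : V ⟶ V := biprod.inr ≫ f ≫ biprod.snd
     let g : A ⊞ U ⟶ B ⊞ U := trHS f hV
     -- the block matrix m = [[f₂₂,f₂₃],[f₃₂,f₃₃]] : U ⊞ V ⟶ U ⊞ V
     let m : U ⊞ V ⟶ U ⊞ V := biprod.desc (biprod.lift f22 f32) (biprod.lift f23 f33)
     -- f reassociated as A ⊞ (U ⊞ V) ⟶ B ⊞ (U ⊞ V)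
     let f' : A ⊞ (U ⊞ V) ⟶ B ⊞ (U ⊞ V) :=
       biprod.lift (biprod.lift biprod.fst (biprod.snd ≫ biprod.fst))
           (biprod.snd ≫ biprod.snd) ≫ f ≫
         biprod.lift (biprod.fst ≫ biprod.fst)
           (biprod.lift (biprod.fst ≫ biprod.snd) biprod.snd)
     c22 g = f22 + f32 ≫ (letI := hV; inv (𝟙 V - c22 f)) ≫ f23 ∧
     (IsIso (𝟙 U - c22 g) ↔ IsIso (𝟙 (U ⊞ V) - m)) ∧
     ∀ (h1 : IsIso (𝟙 U - c22 g)) (h2 : IsIso (𝟙 (U ⊞ V) - c22 f')),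
       trHS g h1 = trHS f' h2) := by
  haveI := hV
  set D' : V ⟶ V := inv (𝟙 V - c22 f) with hD'
  -- part 1
  have part1 : c22 (trHS f hV) =
      (biprod.inr ≫ biprod.inl) ≫ f ≫ (biprod.fst ≫ biprod.snd) +
        ((biprod.inr ≫ biprod.inl) ≫ f ≫ biprod.snd) ≫ D' ≫
          (biprod.inr ≫ f ≫ (biprod.fst ≫ biprod.snd)) := by
    simp [trHS, c11, c12, c21, c22, Preadditive.comp_add, Preadditive.add_comp]
    rfl
  -- abbreviations for the 3x3 entries
  have hm : ∀ (p : U ⟶ U) (q : U ⟶ V) (r : V ⟶ U) (s : V ⟶ V),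
      𝟙 (U ⊞ V) - biprod.desc (biprod.lift p q) (biprod.lift r s) =
        biprod.desc (biprod.lift (𝟙 U - p) (-q)) (biprod.lift (-r) (𝟙 V - s)) := by
    intro p q r s
    ext <;> simp [Preadditive.sub_comp, Preadditive.comp_sub]
  have hSg : 𝟙 U - c22 (trHS f hV) =
      (𝟙 U - (biprod.inr ≫ biprod.inl) ≫ f ≫ (biprod.fst ≫ biprod.snd)) -
        (-((biprod.inr ≫ biprod.inl) ≫ f ≫ biprod.snd)) ≫ D' ≫
          (-(biprod.inr ≫ f ≫ (biprod.fst ≫ biprod.snd))) := by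
    rw [part1]
    simp only [Preadditive.neg_comp, Preadditive.comp_neg, neg_neg]
    abel
  refine ⟨part1, ?_, ?_⟩
  · -- part 2
    rw [hSg, hm]
    have := schur_iff (𝟙 U - (biprod.inr ≫ biprod.inl) ≫ f ≫ (biprod.fst ≫ biprod.snd))
      (-((biprod.inr ≫ biprod.inl) ≫ f ≫ biprod.snd))
      (-(biprod.inr ≫ f ≫ (biprod.fst ≫ biprod.snd))) (𝟙 V - c22 f)
    convert this using 3
    rfl
  · -- part 3
    intro h1 h2
    -- notation
    have hc22f' : c22 (biprod.lift (biprod.lift biprod.fst (biprod.snd ≫ biprod.fst))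
           (biprod.snd ≫ biprod.snd) ≫ f ≫
         biprod.lift (biprod.fst ≫ biprod.fst)
           (biprod.lift (biprod.fst ≫ biprod.snd) biprod.snd)) =
        biprod.desc
          (biprod.lift ((biprod.inr ≫ biprod.inl) ≫ f ≫ (biprod.fst ≫ biprod.snd))
            ((biprod.inr ≫ biprod.inl) ≫ f ≫ biprod.snd))
          (biprod.lift (biprod.inr ≫ f ≫ (biprod.fst ≫ biprod.snd))
            (c22 f)) := by
      ext <;>
        simp [c22, biprod.lift_eq, biprod.desc_eq, Preadditive.comp_add, Preadditive.add_comp,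
          Category.assoc]
    have hSE : IsIso ((𝟙 U - (biprod.inr ≫ biprod.inl) ≫ f ≫ (biprod.fst ≫ biprod.snd)) -
        (-((biprod.inr ≫ biprod.inl) ≫ f ≫ biprod.snd)) ≫ D' ≫
          (-(biprod.inr ≫ f ≫ (biprod.fst ≫ biprod.snd)))) := by
      rw [← hSg]; exact h1
    have hN : IsIso (biprod.desc
        (biprod.lift (𝟙 U - (biprod.inr ≫ biprod.inl) ≫ f ≫ (biprod.fst ≫ biprod.snd))
          (-((biprod.inr ≫ biprod.inl) ≫ f ≫ biprod.snd)))
        (biprod.lift (-(biprod.inr ≫ f ≫ (biprod.fst ≫ biprod.snd))) (𝟙 V - c22 f))) := by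
      rw [← hm]
      rw [← hc22f']
      exact h2
    have hSinv : inv ((𝟙 U - (biprod.inr ≫ biprod.inl) ≫ f ≫ (biprod.fst ≫ biprod.snd)) -
        (-((biprod.inr ≫ biprod.inl) ≫ f ≫ biprod.snd)) ≫ D' ≫
          (-(biprod.inr ≫ f ≫ (biprod.fst ≫ biprod.snd)))) =
        (letI := h1; inv (𝟙 U - c22 (trHS f hV))) := by
      letI := hSE
      apply IsIso.inv_eq_of_hom_inv_id
      rw [← hSg]
      exact IsIso.hom_inv_id _
    have hinv2 : (letI := h2; inv (𝟙 (U ⊞ V) -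
        c22 (biprod.lift (biprod.lift biprod.fst (biprod.snd ≫ biprod.fst))
           (biprod.snd ≫ biprod.snd) ≫ f ≫
         biprod.lift (biprod.fst ≫ biprod.fst)
           (biprod.lift (biprod.fst ≫ biprod.snd) biprod.snd)))) =
        biprod.desc biprod.inl
            (biprod.lift (-(D' ≫ (-(biprod.inr ≫ f ≫ (biprod.fst ≫ biprod.snd))))) (𝟙 V)) ≫
          biprod.map (letI := h1; inv (𝟙 U - c22 (trHS f hV))) D' ≫
          biprod.desc
            (biprod.lift (𝟙 U) (-((-((biprod.inr ≫ biprod.inl) ≫ f ≫ biprod.snd)) ≫ D')))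
            biprod.inr := by
      letI := h2
      apply IsIso.inv_eq_of_hom_inv_id
      rw [hc22f', hm, ← hSinv]
      rw [← schur_inv _ _ _ _ hSE hN]
      exact IsIso.hom_inv_id _
    have e11 : c11 (trHS f hV) = (biprod.inl ≫ biprod.inl) ≫ f ≫ (biprod.fst ≫ biprod.fst) + ((biprod.inl ≫ biprod.inl) ≫ f ≫ biprod.snd) ≫ D' ≫ (biprod.inr ≫ f ≫ (biprod.fst ≫ biprod.fst)) := by
      simp [trHS, c11, c12, c21, c22, Preadditive.comp_add, Preadditive.add_comp]
      try rfl
    have e12 : c12 (trHS f hV) = (biprod.inr ≫ biprod.inl) ≫ f ≫ (biprod.fst ≫ biprod.fst) + ((biprod.inr ≫ biprod.inl) ≫ f ≫ biprod.snd) ≫ D' ≫ (biprod.inr ≫ f ≫ (biprod.fst ≫ biprod.fst)) := by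
      simp [trHS, c11, c12, c21, c22, Preadditive.comp_add, Preadditive.add_comp]
      try rfl
    have e21 : c21 (trHS f hV) = (biprod.inl ≫ biprod.inl) ≫ f ≫ (biprod.fst ≫ biprod.snd) + ((biprod.inl ≫ biprod.inl) ≫ f ≫ biprod.snd) ≫ D' ≫ (biprod.inr ≫ f ≫ (biprod.fst ≫ biprod.snd)) := by
      simp [trHS, c11, c12, c21, c22, Preadditive.comp_add, Preadditive.add_comp]
      try rfl
    have e11' : c11 (biprod.lift (biprod.lift biprod.fst (biprod.snd ≫ biprod.fst))
           (biprod.snd ≫ biprod.snd) ≫ f ≫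
         biprod.lift (biprod.fst ≫ biprod.fst)
           (biprod.lift (biprod.fst ≫ biprod.snd) biprod.snd)) = (biprod.inl ≫ biprod.inl) ≫ f ≫ (biprod.fst ≫ biprod.fst) := by
      simp [c11, c12, c21, biprod.lift_eq, biprod.desc_eq, Preadditive.add_comp, Preadditive.comp_add, Category.assoc]
    have e21' : c21 (biprod.lift (biprod.lift biprod.fst (biprod.snd ≫ biprod.fst))
           (biprod.snd ≫ biprod.snd) ≫ f ≫
         biprod.lift (biprod.fst ≫ biprod.fst)
           (biprod.lift (biprod.fst ≫ biprod.snd) biprod.snd)) = biprod.lift ((biprod.inl ≫ biprod.inl) ≫ f ≫ (biprod.fst ≫ biprod.snd)) ((biprod.inl ≫ biprod.inl) ≫ f ≫ biprod.snd) := by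
      ext <;> simp [c11, c12, c21, biprod.lift_eq, biprod.desc_eq, Preadditive.add_comp, Preadditive.comp_add, Category.assoc]
    have e12' : c12 (biprod.lift (biprod.lift biprod.fst (biprod.snd ≫ biprod.fst))
           (biprod.snd ≫ biprod.snd) ≫ f ≫
         biprod.lift (biprod.fst ≫ biprod.fst)
           (biprod.lift (biprod.fst ≫ biprod.snd) biprod.snd)) = biprod.desc ((biprod.inr ≫ biprod.inl) ≫ f ≫ (biprod.fst ≫ biprod.fst)) (biprod.inr ≫ f ≫ (biprod.fst ≫ biprod.fst)) := by
      ext <;> simp [c11, c12, c21, biprod.lift_eq, biprod.desc_eq, Preadditive.add_comp, Preadditive.comp_add, Category.assoc]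
    show c11 (trHS f hV) + c21 (trHS f hV) ≫ (letI := h1; inv (𝟙 U - c22 (trHS f hV))) ≫ c12 (trHS f hV) =
      c11 (biprod.lift (biprod.lift biprod.fst (biprod.snd ≫ biprod.fst))
           (biprod.snd ≫ biprod.snd) ≫ f ≫
         biprod.lift (biprod.fst ≫ biprod.fst)
           (biprod.lift (biprod.fst ≫ biprod.snd) biprod.snd)) + c21 (biprod.lift (biprod.lift biprod.fst (biprod.snd ≫ biprod.fst))
           (biprod.snd ≫ biprod.snd) ≫ f ≫
         biprod.lift (biprod.fst ≫ biprod.fst)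
           (biprod.lift (biprod.fst ≫ biprod.snd) biprod.snd)) ≫
        (letI := h2; inv (𝟙 (U ⊞ V) - c22 (biprod.lift (biprod.lift biprod.fst (biprod.snd ≫ biprod.fst))
           (biprod.snd ≫ biprod.snd) ≫ f ≫
         biprod.lift (biprod.fst ≫ biprod.fst)
           (biprod.lift (biprod.fst ≫ biprod.snd) biprod.snd)))) ≫ c12 (biprod.lift (biprod.lift biprod.fst (biprod.snd ≫ biprod.fst))
           (biprod.snd ≫ biprod.snd) ≫ f ≫
         biprod.lift (biprod.fst ≫ biprod.fst)
           (biprod.lift (biprod.fst ≫ biprod.snd) biprod.snd))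
    rw [e11, e21, e12, e11', e21', e12', hinv2]
    simp [biprod.lift_eq, biprod.desc_eq, biprod.map_eq, Preadditive.add_comp,
      Preadditive.comp_add, Preadditive.neg_comp, Preadditive.comp_neg, Category.assoc]
    abel
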